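/- For every positive integer k and every real x > 0, Q_{2k}(x) ≥ (x+1)^K where K = ⌊√k⌋, and Q_{2k-1}(x) ≥ x(x+1)^L where L = ⌊(-1+√(1+4k))/2⌋. -/

import Mathlib

open Finset

lemma aux_even (K k i : ℕ) (h : i ≤ K) (hn : K*K ≤ k) :
    i.factorial * K.descFactorial i ≤ k.descFactorial i := by
  have hf : i.factorial = ∏ j ∈ range i, (i - j) := by
    conv_lhs => rw [← Nat.descFactorial_self i]
    exact Nat.descFactorial_eq_prod_range i i
  rw [hf, Nat.descFactorial_eq_prod_range, Nat.descFactorial_eq_prod_range, ← prod_mul_distrib]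
  apply Finset.prod_le_prod'
  intro j hj
  simp only [mem_range] at hj
  have hb1 : 1 ≤ K - j := by omega
  have hb : (K - j) + j = K := by omega
  have ha : i - j ≤ K - j := by omega
  set a := i - j
  set b := K - j
  have h2 : a * b + j ≤ k := by nlinarith
  omega

lemma aux_odd (L k i : ℕ) (h : i ≤ L) (hL : L*(L+1) ≤ k) (hk : 1 ≤ k) :
    (i+1).factorial * L.descFactorial i ≤ k.descFactorial (i+1) := by
  have hf : i.factorial = ∏ j ∈ range i, (i - j) := by
    conv_lhs => rw [← Nat.descFactorial_self i]
    exact Nat.descFactorial_eq_prod_range i i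
  rw [Nat.factorial_succ, Nat.descFactorial_eq_prod_range, Nat.descFactorial_eq_prod_range,
    prod_range_succ', hf, mul_assoc, ← prod_mul_distrib, mul_comm]
  have h1 : i + 1 ≤ k := by rcases Nat.eq_zero_or_pos L with h0 | h0 <;> nlinarith
  apply Nat.mul_le_mul
  · apply Finset.prod_le_prod'
    intro j hj
    simp only [mem_range] at hj
    have hb1 : 1 ≤ L - j := by omega
    have hb : (L - j) + j = L := by omega
    have ha : i - j ≤ L - j := by omega
    set a := i - j
    set b := L - j
    calc a * b ≤ b * b := by nlinarith
      _ ≤ k - (j+1) := by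
          have : b * b + (j + 1) ≤ L * (L+1) := by nlinarith
          omega
  · exact h1

theorem stmt_7 (k : ℕ) (hk : 1 ≤ k) (x : ℝ) (hx : 0 < x) :
    (∑ i ∈ Finset.range (k + 1), (Nat.choose k i : ℝ) / (Nat.factorial i) * x ^ i)
        ≥ (x + 1) ^ (Nat.sqrt k) ∧
    (∑ i ∈ Finset.range k, (Nat.choose k (i + 1) : ℝ) / (Nat.factorial i) * x ^ (i + 1))
        ≥ x * (x + 1) ^ (⌊(-1 + Real.sqrt (1 + 4 * k)) / 2⌋₊) := by
  constructor
  · set K := Nat.sqrt k with hKdef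
    have hK2 : K * K ≤ k := by have := Nat.sqrt_le' k; nlinarith [this]
    have hKk : K ≤ k := Nat.sqrt_le_self k
    have hterm : ∀ i ∈ range (K+1), (K.choose i : ℝ) * x ^ i ≤ (k.choose i : ℝ) / i.factorial * x ^ i := by
      intro i hi
      simp only [mem_range] at hi
      have hi' : i ≤ K := by omega
      have hnat : i.factorial * (i.factorial * K.choose i) ≤ i.factorial * k.choose i := by
        have := aux_even K k i hi' hK2
        rwa [Nat.descFactorial_eq_factorial_mul_choose, Nat.descFactorial_eq_factorial_mul_choose] at this
      have hnat2 : i.factorial * K.choose i ≤ k.choose i := Nat.le_of_mul_le_mul_left hnat i.factorial_pos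
      have hr : (K.choose i : ℝ) ≤ (k.choose i : ℝ) / i.factorial := by
        rw [le_div_iff₀ (by positivity)]
        calc (K.choose i : ℝ) * i.factorial = ((i.factorial * K.choose i : ℕ) : ℝ) := by push_cast; ring
          _ ≤ k.choose i := by exact_mod_cast hnat2
      exact mul_le_mul_of_nonneg_right hr (by positivity)
    calc (x+1)^K = ∑ i ∈ range (K+1), (K.choose i : ℝ) * x ^ i := by
          rw [add_pow]
          exact Finset.sum_congr rfl fun i _ => by ring
      _ ≤ ∑ i ∈ range (K+1), (k.choose i : ℝ) / i.factorial * x ^ i := Finset.sum_le_sum hterm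
      _ ≤ ∑ i ∈ range (k+1), (k.choose i : ℝ) / i.factorial * x ^ i := by
          apply Finset.sum_le_sum_of_subset_of_nonneg (Finset.range_subset_range.mpr (by omega))
          intro i _ _
          positivity
  · set L := ⌊(-1 + Real.sqrt (1 + 4 * k)) / 2⌋₊ with hLdef
    have hs0 : (0:ℝ) ≤ 1 + 4 * k := by positivity
    have hy0 : (0:ℝ) ≤ (-1 + Real.sqrt (1 + 4 * k)) / 2 := by
      have h1 : (1:ℝ) ≤ Real.sqrt (1 + 4 * k) := by
        rw [show (1:ℝ) = Real.sqrt 1 from Real.sqrt_one.symm]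
        exact Real.sqrt_le_sqrt (by norm_num)
      linarith
    have hLy : (L:ℝ) ≤ (-1 + Real.sqrt (1 + 4 * k)) / 2 := Nat.floor_le hy0
    have hsq : Real.sqrt (1 + 4 * k) ^ 2 = 1 + 4 * k := Real.sq_sqrt hs0
    have hL2r : (L:ℝ) * (L + 1) ≤ k := by
      have h2 : (2 * (L:ℝ) + 1) ^ 2 ≤ Real.sqrt (1 + 4 * k) ^ 2 := by
        apply pow_le_pow_left₀ (by positivity)
        linarith
      rw [hsq] at h2
      nlinarith
    have hL2 : L * (L + 1) ≤ k := by exact_mod_cast hL2r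
    have hLk : L + 1 ≤ k := by
      rcases Nat.eq_zero_or_pos L with h0 | h0
      · omega
      · nlinarith
    have hterm : ∀ i ∈ range (L+1), (L.choose i : ℝ) * x ^ (i+1) ≤ (k.choose (i+1) : ℝ) / i.factorial * x ^ (i+1) := by
      intro i hi
      simp only [mem_range] at hi
      have hi' : i ≤ L := by omega
      have hnat : (i+1).factorial * (i.factorial * L.choose i) ≤ (i+1).factorial * k.choose (i+1) := by
        have := aux_odd L k i hi' hL2 hk
        rwa [Nat.descFactorial_eq_factorial_mul_choose, Nat.descFactorial_eq_factorial_mul_choose] at this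
      have hnat2 : i.factorial * L.choose i ≤ k.choose (i+1) := Nat.le_of_mul_le_mul_left hnat (i+1).factorial_pos
      have hr : (L.choose i : ℝ) ≤ (k.choose (i+1) : ℝ) / i.factorial := by
        rw [le_div_iff₀ (by positivity)]
        calc (L.choose i : ℝ) * i.factorial = ((i.factorial * L.choose i : ℕ) : ℝ) := by push_cast; ring
          _ ≤ k.choose (i+1) := by exact_mod_cast hnat2
      exact mul_le_mul_of_nonneg_right hr (by positivity)
    calc x * (x+1)^L = ∑ i ∈ range (L+1), (L.choose i : ℝ) * x ^ (i+1) := by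
          rw [add_pow, Finset.mul_sum]
          exact Finset.sum_congr rfl fun i _ => by ring
      _ ≤ ∑ i ∈ range (L+1), (k.choose (i+1) : ℝ) / i.factorial * x ^ (i+1) := Finset.sum_le_sum hterm
      _ ≤ ∑ i ∈ range k, (k.choose (i+1) : ℝ) / i.factorial * x ^ (i+1) := by
          apply Finset.sum_le_sum_of_subset_of_nonneg (Finset.range_subset_range.mpr (by omega))
          intro i _ _
          positivity
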